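/- Second-order accuracy of Strang splitting: if D and N are bounded linear operators on a Banach space, then ‖exp(h(D+N)) − exp((h/2)D)exp(hN)exp((h/2)D)‖ ≤ C h³ for all 0 ≤ h ≤ 1, with C depending only on ‖D‖ and ‖N‖. -/

import Mathlib

open NormedSpace

section StrangAux
variable {𝔸 : Type*} [NormedRing 𝔸] [NormedAlgebra ℝ 𝔸] [CompleteSpace 𝔸]

set_option linter.unusedSectionVars false

noncomputable def eE (x : 𝔸) (t : ℝ) : 𝔸 := exp (t • x)

lemma eE_zero (x : 𝔸) : eE x 0 = 1 := by simp [eE]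

lemma hd_eE (x : 𝔸) (t : ℝ) : HasDerivAt (eE x) (x * eE x t) t :=
  hasDerivAt_exp_smul_const' x t

lemma hd_eE' (x : 𝔸) (t : ℝ) : HasDerivAt (eE x) (eE x t * x) t :=
  hasDerivAt_exp_smul_const x t

noncomputable def gS (E N : 𝔸) (t : ℝ) : 𝔸 := eE E t * eE N t * eE E t
noncomputable def w1S (E N : 𝔸) (t : ℝ) : 𝔸 := eE E t * N * eE N t * eE E t
noncomputable def w2S (E N : 𝔸) (t : ℝ) : 𝔸 := eE E t * N * N * eE N t * eE E t
noncomputable def w3S (E N : 𝔸) (t : ℝ) : 𝔸 := eE E t * N * N * N * eE N t * eE E t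
noncomputable def V1S (E N : 𝔸) (t : ℝ) : 𝔸 := E * w1S E N t + w2S E N t + w1S E N t * E
noncomputable def V2S (E N : 𝔸) (t : ℝ) : 𝔸 := E * w2S E N t + w3S E N t + w2S E N t * E
noncomputable def G1S (E N : 𝔸) (t : ℝ) : 𝔸 := E * gS E N t + w1S E N t + gS E N t * E
noncomputable def G2S (E N : 𝔸) (t : ℝ) : 𝔸 := E * G1S E N t + V1S E N t + G1S E N t * E
noncomputable def G3S (E N : 𝔸) (t : ℝ) : 𝔸 :=
  E * G2S E N t + (E * V1S E N t + V2S E N t + V1S E N t * E) + G2S E N t * E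

lemma hd_g (E N : 𝔸) (t : ℝ) : HasDerivAt (gS E N) (G1S E N t) t := by
  have H := ((hd_eE E t).mul (hd_eE N t)).mul (hd_eE' E t)
  have heq : (E * eE E t * eE N t + eE E t * (N * eE N t)) * eE E t
      + eE E t * eE N t * (eE E t * E) = G1S E N t := by
    unfold G1S gS w1S; noncomm_ring
  exact heq ▸ H

lemma hd_w1 (E N : 𝔸) (t : ℝ) : HasDerivAt (w1S E N) (V1S E N t) t := by
  have H := (((hd_eE E t).mul_const N).mul (hd_eE N t)).mul (hd_eE' E t)
  have heq : (E * eE E t * N * eE N t + eE E t * N * (N * eE N t)) * eE E t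
      + eE E t * N * eE N t * (eE E t * E) = V1S E N t := by
    unfold V1S w1S w2S; noncomm_ring
  exact heq ▸ H

lemma hd_w2 (E N : 𝔸) (t : ℝ) : HasDerivAt (w2S E N) (V2S E N t) t := by
  have H := ((((hd_eE E t).mul_const N).mul_const N).mul (hd_eE N t)).mul (hd_eE' E t)
  have heq : (E * eE E t * N * N * eE N t + eE E t * N * N * (N * eE N t)) * eE E t
      + eE E t * N * N * eE N t * (eE E t * E) = V2S E N t := by
    unfold V2S w2S w3S; noncomm_ring
  exact heq ▸ H

lemma hd_G1 (E N : 𝔸) (t : ℝ) : HasDerivAt (G1S E N) (G2S E N t) t :=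
  (((hd_g E N t).const_mul E).add (hd_w1 E N t)).add ((hd_g E N t).mul_const E)

lemma hd_G2 (E N : 𝔸) (t : ℝ) : HasDerivAt (G2S E N) (G3S E N t) t := by
  have HV1 : HasDerivAt (V1S E N) (E * V1S E N t + V2S E N t + V1S E N t * E) t :=
    (((hd_w1 E N t).const_mul E).add (hd_w2 E N t)).add ((hd_w1 E N t).mul_const E)
  exact (((hd_G1 E N t).const_mul E).add HV1).add ((hd_G1 E N t).mul_const E)

lemma aux_norm_exp_le (x : 𝔸) : ‖exp x‖ ≤ ‖(1:𝔸)‖ + Real.exp ‖x‖ := by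
  have hsum : Summable fun n : ℕ => ‖(n.factorial : ℝ)⁻¹ • x ^ n‖ := norm_expSeries_summable' x
  rw [exp_eq_tsum (𝕂 := ℝ)]
  refine (norm_tsum_le_tsum_norm hsum).trans ?_
  rw [Summable.tsum_eq_zero_add hsum]
  have h0 : ‖((Nat.factorial 0 : ℝ))⁻¹ • x ^ 0‖ = ‖(1:𝔸)‖ := by simp
  rw [h0]
  gcongr
  have hs2 : Summable (fun n : ℕ => ‖x‖ ^ (n+1) / (n+1).factorial) := by
    exact_mod_cast (summable_nat_add_iff 1).2 (Real.summable_pow_div_factorial ‖x‖)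
  have hterm : ∀ n : ℕ, ‖((n+1).factorial : ℝ)⁻¹ • x ^ (n+1)‖ ≤ ‖x‖ ^ (n+1) / (n+1).factorial := by
    intro n
    rw [norm_smul, div_eq_inv_mul]
    have h1 : ‖(((n+1).factorial : ℝ))⁻¹‖ = (((n+1).factorial : ℝ))⁻¹ := by
      rw [Real.norm_eq_abs, abs_of_nonneg (by positivity)]
    rw [h1]
    gcongr
    exact norm_pow_le' x (Nat.succ_pos n)
  refine (Summable.tsum_le_tsum hterm ((summable_nat_add_iff 1).2 hsum) hs2).trans ?_
  have hexp : Real.exp ‖x‖ = ∑' n : ℕ, ‖x‖ ^ n / n.factorial := by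
    rw [Real.exp_eq_exp_ℝ]; exact congrFun exp_eq_tsum_div ‖x‖
  rw [hexp, Summable.tsum_eq_zero_add (Real.summable_pow_div_factorial ‖x‖)]
  simp

lemma aux_norm_exp_smul_le (x : 𝔸) {t c : ℝ} (ht : |t| ≤ 1) (hc : ‖x‖ ≤ c) :
    ‖exp (t • x)‖ ≤ ‖(1:𝔸)‖ + Real.exp c := by
  refine (aux_norm_exp_le _).trans (add_le_add le_rfl ?_)
  rw [Real.exp_le_exp, norm_smul, Real.norm_eq_abs]
  calc |t| * ‖x‖ ≤ 1 * c := by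
        apply mul_le_mul ht hc (norm_nonneg _) zero_le_one
    _ = c := one_mul c

lemma mul_bound {a b : 𝔸} {x y : ℝ} (ha : ‖a‖ ≤ x) (hb : ‖b‖ ≤ y) (hy : 0 ≤ y) :
    ‖a * b‖ ≤ x * y :=
  (norm_mul_le a b).trans (mul_le_mul ha hb (norm_nonneg b) ((norm_nonneg a).trans ha))

lemma add_bound {a b : 𝔸} {x y : ℝ} (ha : ‖a‖ ≤ x) (hb : ‖b‖ ≤ y) :
    ‖a + b‖ ≤ x + y := (norm_add_le a b).trans (add_le_add ha hb)

end StrangAux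

section More
variable {𝔸 : Type*} [NormedRing 𝔸] [NormedAlgebra ℝ 𝔸] [CompleteSpace 𝔸]
set_option linter.unusedSectionVars false

lemma strang_F3_bound (E N A : 𝔸) {B : ℝ} (hB1 : 1 ≤ B) (hE : ‖E‖ ≤ B) (hN : ‖N‖ ≤ B)
    (hA : ‖A‖ ≤ B) {t : ℝ} (hu : ‖eE E t‖ ≤ B) (hv : ‖eE N t‖ ≤ B) (hf : ‖eE A t‖ ≤ B) :
    ‖A * (A * (A * eE A t)) - G3S E N t‖ ≤ 28 * B ^ 6 := by
  have hB0 : (0:ℝ) ≤ B := zero_le_one.trans hB1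
  have n3 : (0:ℝ) ≤ B^3 := pow_nonneg hB0 3
  have n4 : (0:ℝ) ≤ 3*B^4 := by nlinarith [pow_nonneg hB0 4]
  have n5 : (0:ℝ) ≤ 3*B^5 := by nlinarith [pow_nonneg hB0 5]
  have n9 : (0:ℝ) ≤ 9*B^5 := by nlinarith [pow_nonneg hB0 5]
  have hg : ‖gS E N t‖ ≤ B^3 :=
    le_of_le_of_eq (mul_bound (mul_bound hu hv hB0) hu hB0) (by ring)
  have hw1 : ‖w1S E N t‖ ≤ B^4 :=
    le_of_le_of_eq (mul_bound (mul_bound (mul_bound hu hN hB0) hv hB0) hu hB0) (by ring)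
  have hw2 : ‖w2S E N t‖ ≤ B^5 :=
    le_of_le_of_eq (mul_bound (mul_bound (mul_bound (mul_bound hu hN hB0) hN hB0) hv hB0) hu hB0)
      (by ring)
  have hw3 : ‖w3S E N t‖ ≤ B^6 :=
    le_of_le_of_eq (mul_bound (mul_bound (mul_bound (mul_bound (mul_bound hu hN hB0) hN hB0) hN
      hB0) hv hB0) hu hB0) (by ring)
  have hG1 : ‖G1S E N t‖ ≤ 3*B^4 :=
    le_of_le_of_eq (add_bound (add_bound (mul_bound hE hg n3) hw1) (mul_bound hg hE hB0))
      (by ring)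
  have hV1 : ‖V1S E N t‖ ≤ 3*B^5 :=
    le_of_le_of_eq (add_bound (add_bound (mul_bound hE hw1 (pow_nonneg hB0 4)) hw2)
      (mul_bound hw1 hE hB0)) (by ring)
  have hV2 : ‖V2S E N t‖ ≤ 3*B^6 :=
    le_of_le_of_eq (add_bound (add_bound (mul_bound hE hw2 (pow_nonneg hB0 5)) hw3)
      (mul_bound hw2 hE hB0)) (by ring)
  have hG2 : ‖G2S E N t‖ ≤ 9*B^5 :=
    le_of_le_of_eq (add_bound (add_bound (mul_bound hE hG1 n4) hV1) (mul_bound hG1 hE hB0))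
      (by ring)
  have hG3 : ‖G3S E N t‖ ≤ 27*B^6 :=
    le_of_le_of_eq (add_bound (add_bound (mul_bound hE hG2 n9)
      (add_bound (add_bound (mul_bound hE hV1 n5) hV2) (mul_bound hV1 hE hB0)))
      (mul_bound hG2 hE hB0)) (by ring)
  have hAf : ‖A * (A * (A * eE A t))‖ ≤ B^4 :=
    le_of_le_of_eq (mul_bound hA (mul_bound hA (mul_bound hA hf hB0) (by nlinarith))
      (by nlinarith)) (by ring)
  have hB2 : 1 ≤ B*B := by nlinarith
  have h46 : B^4 ≤ B^6 := by nlinarith [pow_nonneg hB0 4, hB2]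
  calc ‖A * (A * (A * eE A t)) - G3S E N t‖ ≤ B^4 + 27*B^6 :=
        (norm_sub_le _ _).trans (add_le_add hAf hG3)
    _ ≤ 28 * B^6 := by linarith
end More

section Main
variable {𝔸 : Type*} [NormedRing 𝔸] [NormedAlgebra ℝ 𝔸] [CompleteSpace 𝔸]
set_option linter.unusedSectionVars false

lemma strang_aux (D N : 𝔸) (h : ℝ) (h0 : 0 ≤ h) (h1 : h ≤ 1) :
    ‖exp (h • (D + N)) - exp ((h / 2) • D) * exp (h • N) * exp ((h / 2) • D)‖ ≤
      28 * (‖(1:𝔸)‖ + Real.exp (‖D‖ + ‖N‖) + ‖D‖ + ‖N‖ + 2) ^ 6 * h ^ 3 := by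
  set E : 𝔸 := (2⁻¹ : ℝ) • D with hEdef
  set B : ℝ := ‖(1:𝔸)‖ + Real.exp (‖D‖ + ‖N‖) + ‖D‖ + ‖N‖ + 2 with hBdef
  set A : 𝔸 := E + E + N with hAdef
  have hexp1 : 1 ≤ Real.exp (‖D‖ + ‖N‖) := Real.one_le_exp (by positivity)
  have hB1 : 1 ≤ B := by
    have := norm_nonneg (1:𝔸); have := norm_nonneg D; have := norm_nonneg N
    rw [hBdef]; linarith
  have hB0 : (0:ℝ) ≤ B := zero_le_one.trans hB1
  have hEnorm : ‖E‖ = 2⁻¹ * ‖D‖ := by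
    rw [hEdef, norm_smul, Real.norm_eq_abs, abs_of_nonneg (by norm_num)]
  have hAnorm : ‖A‖ ≤ ‖D‖ + ‖N‖ := by
    rw [hAdef]
    refine (norm_add₃_le).trans ?_
    rw [hEnorm]; linarith [norm_nonneg D]
  have hDN_le_B : ‖D‖ + ‖N‖ ≤ B := by
    have := norm_nonneg (1:𝔸); rw [hBdef]; linarith
  have hEB : ‖E‖ ≤ B := by rw [hEnorm]; nlinarith [norm_nonneg D, norm_nonneg N]
  have hNB : ‖N‖ ≤ B := by nlinarith [norm_nonneg D]
  have hAB : ‖A‖ ≤ B := hAnorm.trans hDN_le_B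
  have hexpB : ‖(1:𝔸)‖ + Real.exp (‖D‖ + ‖N‖) ≤ B := by
    rw [hBdef]; linarith [norm_nonneg D, norm_nonneg N]
  -- norm bounds of the exponentials on [0,1]
  have hub : ∀ t ∈ Set.Icc (0:ℝ) 1, ‖eE E t‖ ≤ B := by
    intro t ht
    refine (aux_norm_exp_smul_le E (abs_le.2 ⟨by linarith [ht.1], ht.2⟩) ?_).trans hexpB
    rw [hEnorm]; linarith [norm_nonneg D, norm_nonneg N]
  have hvb : ∀ t ∈ Set.Icc (0:ℝ) 1, ‖eE N t‖ ≤ B := by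
    intro t ht
    refine (aux_norm_exp_smul_le N (abs_le.2 ⟨by linarith [ht.1], ht.2⟩) ?_).trans hexpB
    linarith [norm_nonneg D]
  have hfb : ∀ t ∈ Set.Icc (0:ℝ) 1, ‖eE A t‖ ≤ B := by
    intro t ht
    exact (aux_norm_exp_smul_le A (abs_le.2 ⟨by linarith [ht.1], ht.2⟩) hAnorm).trans hexpB
  -- the F3 bound
  have hF3b : ∀ t ∈ Set.Icc (0:ℝ) 1, ‖A * (A * (A * eE A t)) - G3S E N t‖ ≤ 28 * B ^ 6 :=
    fun t ht => strang_F3_bound E N A hB1 hEB hNB hAB (hub t ht) (hvb t ht) (hfb t ht)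
  -- derivatives of the three remainder functions
  have hF2d : ∀ t : ℝ, HasDerivAt (fun t => A * (A * eE A t) - G2S E N t)
      (A * (A * (A * eE A t)) - G3S E N t) t :=
    fun t => (((hd_eE A t).const_mul A).const_mul A).sub (hd_G2 E N t)
  have hF1d : ∀ t : ℝ, HasDerivAt (fun t => A * eE A t - G1S E N t)
      (A * (A * eE A t) - G2S E N t) t :=
    fun t => ((hd_eE A t).const_mul A).sub (hd_G1 E N t)
  have hF0d : ∀ t : ℝ, HasDerivAt (fun t => eE A t - gS E N t)
      (A * eE A t - G1S E N t) t :=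
    fun t => (hd_eE A t).sub (hd_g E N t)
  -- vanishing at 0
  have hF2z : A * (A * eE A 0) - G2S E N 0 = 0 := by
    simp only [G2S, G1S, V1S, gS, w1S, w2S, eE_zero, hAdef]
    noncomm_ring
  have hF1z : A * eE A 0 - G1S E N 0 = 0 := by
    simp only [G1S, gS, w1S, eE_zero, hAdef]
    noncomm_ring
  have hF0z : eE A 0 - gS E N 0 = 0 := by
    simp only [gS, eE_zero]
    noncomm_ring
  set M : ℝ := 28 * B ^ 6 with hMdef
  have hM0 : 0 ≤ M := by rw [hMdef]; positivity
  have hsub : Set.Icc (0:ℝ) h ⊆ Set.Icc (0:ℝ) 1 := Set.Icc_subset_Icc le_rfl h1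
  have hmem0 : (0:ℝ) ∈ Set.Icc (0:ℝ) h := Set.left_mem_Icc.2 h0
  -- first mean value step
  have key2 : ∀ t ∈ Set.Icc (0:ℝ) h, ‖A * (A * eE A t) - G2S E N t‖ ≤ M * h := by
    intro t ht
    have H := Convex.norm_image_sub_le_of_norm_hasDerivWithin_le
      (f := fun t => A * (A * eE A t) - G2S E N t)
      (f' := fun t => A * (A * (A * eE A t)) - G3S E N t)
      (fun x hx => (hF2d x).hasDerivWithinAt)
      (fun x hx => hF3b x (hsub hx)) (convex_Icc 0 h) hmem0 ht
    beta_reduce at H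
    rw [hF2z, sub_zero, sub_zero, Real.norm_eq_abs, abs_of_nonneg ht.1] at H
    exact H.trans (mul_le_mul_of_nonneg_left ht.2 hM0)
  have key1 : ∀ t ∈ Set.Icc (0:ℝ) h, ‖A * eE A t - G1S E N t‖ ≤ M * h * h := by
    intro t ht
    have H := Convex.norm_image_sub_le_of_norm_hasDerivWithin_le
      (f := fun t => A * eE A t - G1S E N t)
      (f' := fun t => A * (A * eE A t) - G2S E N t)
      (fun x hx => (hF1d x).hasDerivWithinAt)
      (fun x hx => key2 x hx) (convex_Icc 0 h) hmem0 ht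
    beta_reduce at H
    rw [hF1z, sub_zero, sub_zero, Real.norm_eq_abs, abs_of_nonneg ht.1] at H
    exact H.trans (mul_le_mul_of_nonneg_left ht.2 (by positivity))
  have key0 : ‖eE A h - gS E N h‖ ≤ M * h * h * h := by
    have H := Convex.norm_image_sub_le_of_norm_hasDerivWithin_le
      (f := fun t => eE A t - gS E N t)
      (f' := fun t => A * eE A t - G1S E N t)
      (fun x hx => (hF0d x).hasDerivWithinAt)
      (fun x hx => key1 x hx) (convex_Icc 0 h) hmem0 (Set.right_mem_Icc.2 h0)
    beta_reduce at H
    rw [hF0z, sub_zero, sub_zero, Real.norm_eq_abs, abs_of_nonneg h0] at H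
    exact H
  -- identify the goal with F0 h
  have e1 : exp (h • (D + N)) = eE A h := by
    rw [eE, hAdef, hEdef]
    congr 2
    module
  have e2 : exp ((h / 2) • D) = eE E h := by
    have hh : h / 2 = h * 2⁻¹ := by ring
    rw [eE, hEdef, smul_smul, ← hh]
  have e3 : exp (h • N) = eE N h := rfl
  rw [e1, e2, e3]
  calc ‖eE A h - gS E N h‖ ≤ M * h * h * h := key0
    _ = M * h ^ 3 := by ring

end Main


/-- Second-order accuracy of Strang splitting in a Banach algebra:
`‖exp(h(D+N)) − exp((h/2)D)·exp(hN)·exp((h/2)D)‖ ≤ C h³` for `0 ≤ h ≤ 1`, with a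
constant `C` depending only on `‖D‖` and `‖N‖`. -/
theorem strang_splitting_second_order (𝔸 : Type*) [NormedRing 𝔸] [NormedAlgebra ℝ 𝔸]
    [CompleteSpace 𝔸] :
    ∃ C : ℝ → ℝ → ℝ, ∀ D N : 𝔸, ∀ h : ℝ, 0 ≤ h → h ≤ 1 →
      ‖exp (h • (D + N)) - exp ((h / 2) • D) * exp (h • N) * exp ((h / 2) • D)‖ ≤
        C ‖D‖ ‖N‖ * h ^ 3 :=
  ⟨fun a b => 28 * (‖(1:𝔸)‖ + Real.exp (a + b) + a + b + 2) ^ 6,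
    fun D N h h0 h1 => strang_aux D N h h0 h1⟩
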